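/- Let Q be a real p×p orthogonal matrix (QᵀQ = I_p), a₁,…,a_p real numbers, Λ₀ = diag{a₁,…,a_p}, and ρ > 0. Define Ω = Qᵀ·diag{(a₁+√(a₁²+4ρ))/(2ρ),…,(a_p+√(a_p²+4ρ))/(2ρ)}·Q. Then Ω is positive definite (in particular invertible) and satisfies ρΩ − Ω⁻¹ = QᵀΛ₀Q. -/

import Mathlib

open Matrix

/-- For `Q` orthogonal (`QᵀQ = I`), `Λ₀ = diag{a₁,…,a_p}` and `ρ > 0`,
the matrix `Ω = Qᵀ diag{(aᵢ+√(aᵢ²+4ρ))/(2ρ)} Q` is positive definite (in particular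
invertible) and satisfies `ρ Ω − Ω⁻¹ = Qᵀ Λ₀ Q`. -/
theorem stmt_10 (p : ℕ) (hp : 0 < p)
    (Q : Matrix (Fin p) (Fin p) ℝ) (hQ : Qᵀ * Q = 1)
    (a : Fin p → ℝ)
    (Λ₀ : Matrix (Fin p) (Fin p) ℝ) (hΛ₀ : Λ₀ = Matrix.diagonal a)
    (ρ : ℝ) (hρ : 0 < ρ)
    (Ω : Matrix (Fin p) (Fin p) ℝ)
    (hΩ : Ω = Qᵀ * Matrix.diagonal
      (fun i => (a i + Real.sqrt ((a i) ^ 2 + 4 * ρ)) / (2 * ρ)) * Q) :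
    Ω.PosDef ∧ IsUnit Ω ∧ ρ • Ω - Ω⁻¹ = Qᵀ * Λ₀ * Q := by
  set d : Fin p → ℝ := fun i => (a i + Real.sqrt ((a i) ^ 2 + 4 * ρ)) / (2 * ρ) with hd_def
  have hsq : ∀ i, Real.sqrt ((a i) ^ 2 + 4 * ρ) ^ 2 = (a i) ^ 2 + 4 * ρ := fun i =>
    Real.sq_sqrt (by positivity)
  have hd : ∀ i, 0 < d i := by
    intro i
    have h1 : |a i| < Real.sqrt ((a i) ^ 2 + 4 * ρ) := by
      rw [show |a i| = Real.sqrt ((a i) ^ 2) by rw [Real.sqrt_sq_eq_abs]]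
      exact Real.sqrt_lt_sqrt (by positivity) (by linarith)
    have h2 : -a i ≤ |a i| := neg_le_abs _
    have : 0 < a i + Real.sqrt ((a i) ^ 2 + 4 * ρ) := by linarith
    exact div_pos this (by linarith)
  have hdne : ∀ i, d i ≠ 0 := fun i => (hd i).ne'
  have hkey : ∀ i, ρ * d i - (d i)⁻¹ = a i := by
    intro i
    have h := hsq i
    have h1 : |a i| < Real.sqrt ((a i) ^ 2 + 4 * ρ) := by
      rw [show |a i| = Real.sqrt ((a i) ^ 2) by rw [Real.sqrt_sq_eq_abs]]
      exact Real.sqrt_lt_sqrt (by positivity) (by linarith)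
    have hne : a i + Real.sqrt ((a i) ^ 2 + 4 * ρ) ≠ 0 := by
      have := neg_le_abs (a i); linarith
    rw [hd_def]
    simp only
    field_simp
    rw [div_eq_iff (by rw [mul_comm ρ 4]; exact hne), mul_comm ρ 4]
    nlinarith [hsq i]
  have hQQt : Q * Qᵀ = 1 := mul_eq_one_comm.mp hQ
  have hDpos : (Matrix.diagonal d).PosDef := Matrix.PosDef.diagonal hd
  -- Positive definiteness
  have hposdef : Ω.PosDef := by
    refine Matrix.PosDef.of_dotProduct_mulVec_pos ?_ ?_
    · show Ωᴴ = Ω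
      rw [hΩ]
      simp [Matrix.conjTranspose_mul, Matrix.mul_assoc, Matrix.diagonal_conjTranspose]
    · intro x hx
      have hQx : Q *ᵥ x ≠ 0 := by
        intro h
        apply hx
        have : Qᵀ *ᵥ (Q *ᵥ x) = 0 := by rw [h, Matrix.mulVec_zero]
        rwa [Matrix.mulVec_mulVec, hQ, Matrix.one_mulVec] at this
      have := hDpos.dotProduct_mulVec_pos hQx
      have heq : star x ⬝ᵥ (Ω *ᵥ x) =
          star (Q *ᵥ x) ⬝ᵥ (Matrix.diagonal d *ᵥ (Q *ᵥ x)) := by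
        rw [hΩ]
        simp [← Matrix.mulVec_mulVec, Matrix.dotProduct_mulVec, Matrix.vecMul_transpose,
          star_trivial]
      rw [heq]
      exact this
  refine ⟨hposdef, hposdef.isUnit, ?_⟩
  -- Inverse formula
  have hinv : Ω⁻¹ = Qᵀ * Matrix.diagonal (fun i => (d i)⁻¹) * Q := by
    apply Matrix.inv_eq_right_inv
    rw [hΩ]
    have : Matrix.diagonal d * Matrix.diagonal (fun i => (d i)⁻¹) = 1 := by
      rw [Matrix.diagonal_mul_diagonal]
      rw [show (fun i => d i * (d i)⁻¹) = fun _ : Fin p => (1:ℝ) from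
        funext fun i => mul_inv_cancel₀ (hdne i)]
      exact Matrix.diagonal_one
    simp only [Matrix.mul_assoc]
    rw [show Q * (Qᵀ * (Matrix.diagonal (fun i => (d i)⁻¹) * Q)) =
        Matrix.diagonal (fun i => (d i)⁻¹) * Q from by
      rw [← Matrix.mul_assoc, hQQt, Matrix.one_mul]]
    rw [← Matrix.mul_assoc (Matrix.diagonal d), this, Matrix.one_mul, hQ]
  have hdiag : ρ • Matrix.diagonal d - Matrix.diagonal (fun i => (d i)⁻¹)
      = Matrix.diagonal a := by
    ext i j
    rcases eq_or_ne i j with rfl | h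
    · simp [hkey i]
    · simp [Matrix.diagonal_apply_ne _ h]
  rw [hinv, hΩ, hΛ₀]
  have h1 : ρ • (Qᵀ * Matrix.diagonal d * Q) = Qᵀ * (ρ • Matrix.diagonal d) * Q := by
    simp [Matrix.mul_smul, Matrix.smul_mul]
  rw [h1, ← Matrix.sub_mul, ← Matrix.mul_sub, hdiag]
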